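/- Let g : ℝ^m → ℝ^k have convex differentiable components, let K := {u ∈ ℝ^m : g(u) ≤ 0}, and assume Slater's condition: there exists û with g(û) < 0 (componentwise). Let u ∈ K and w ∈ ℝ^m. Then ⟨u' − u, w⟩ ≥ 0 for every u' ∈ K if and only if there exists λ ∈ ℝ^k such that w + ∇g(u)λ = 0, λ ≥ 0, g(u) ≤ 0, and ⟨λ, g(u)⟩ = 0 (i.e., 0 ≤ λ ⊥ −g(u) ≥ 0). -/

import Mathlib

open scoped RealInnerProductSpace

noncomputable section

abbrev V (n : ℕ) : Type := EuclideanSpace ℝ (Fin n)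

lemma line_hasDerivAt {m : ℕ} (f : V m → ℝ) (hf : Differentiable ℝ f) (x d : V m) :
    HasDerivAt (fun t : ℝ => f (x + t • d)) ⟪gradient f x, d⟫ 0 := by
  have hline : HasDerivAt (fun t : ℝ => x + t • d) d 0 := by
    simpa using ((hasDerivAt_id (0:ℝ)).smul_const d).const_add x
  have hg : HasGradientAt f (gradient f x) x := (hf x).hasGradientAt
  have hfd : HasFDerivAt f ((InnerProductSpace.toDual ℝ (V m)) (gradient f x)) x :=
    (hasGradientAt_iff_hasFDerivAt).mp hg
  rw [show x = x + (0:ℝ) • d by simp] at hfd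
  have := hfd.comp_hasDerivAt (0:ℝ) hline
  simpa [InnerProductSpace.toDual_apply_apply, Function.comp_def] using this

lemma grad_ineq {m : ℕ} (f : V m → ℝ) (hconv : ConvexOn ℝ Set.univ f)
    (hf : Differentiable ℝ f) (x y : V m) :
    ⟪gradient f x, y - x⟫ ≤ f y - f x := by
  set φ : ℝ → ℝ := fun t => f (x + t • (y - x)) with hφ
  have hφconv : ConvexOn ℝ Set.univ φ := by
    have := hconv.comp_affineMap (AffineMap.lineMap x y : ℝ →ᵃ[ℝ] V m)
    have heq : φ = f ∘ (AffineMap.lineMap x y : ℝ →ᵃ[ℝ] V m) := by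
      funext t
      simp [φ, AffineMap.lineMap_apply, add_comm, vadd_eq_add]
    rw [heq]
    simpa using this
  have hder : HasDerivAt φ ⟪gradient f x, y - x⟫ 0 := line_hasDerivAt f hf x (y - x)
  have h2 := hφconv.le_slope_of_hasDerivAt (Set.mem_univ (0:ℝ)) (Set.mem_univ 1) one_pos hder
  have hs : slope φ 0 1 = f y - f x := by
    simp [slope_def_field, φ]
  linarith [hs ▸ h2]

lemma farkas_fin {m : ℕ} : ∀ (n : ℕ) (a : Fin n → V m) (b : V m),
    (∀ d : V m, (∀ i, ⟪a i, d⟫ ≤ 0) → ⟪b, d⟫ ≤ 0) →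
    ∃ μ : Fin n → ℝ, (∀ i, 0 ≤ μ i) ∧ b = ∑ i, μ i • a i := by
  intro n
  induction n with
  | zero =>
    intro a b h
    have hb : b = 0 := by
      have := h b (fun i => i.elim0)
      exact (real_inner_self_nonpos).mp this
    exact ⟨fun i => 0, fun i => le_refl _, by simp [hb]⟩
  | succ n IH =>
    intro a b h
    set a' : Fin n → V m := fun i => a i.castSucc with ha'
    set aN : V m := a (Fin.last n) with haN
    by_cases hc : ∀ d : V m, (∀ i, ⟪a' i, d⟫ ≤ 0) → ⟪b, d⟫ ≤ 0
    · obtain ⟨μ, hμ, hb⟩ := IH a' b hc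
      refine ⟨Fin.snoc μ 0, ?_, ?_⟩
      · intro i
        refine Fin.lastCases ?_ ?_ i
        · simp
        · intro j; simp [hμ j]
      · rw [Fin.sum_univ_castSucc]
        simp [Fin.snoc_castSucc, hb, ha']
    · push_neg at hc
      obtain ⟨d, hd, hbd⟩ := hc
      have hNd : 0 < ⟪aN, d⟫ := by
        by_contra hn
        push_neg at hn
        have : ∀ i : Fin (n+1), ⟪a i, d⟫ ≤ 0 := by
          intro i
          refine Fin.lastCases ?_ ?_ i
          · exact hn
          · intro j; exact hd j
        exact absurd (h d this) (not_le.mpr hbd)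
      have hNd' : ⟪aN, d⟫ ≠ 0 := ne_of_gt hNd
      set q : V m → ℝ := fun x => ⟪x, d⟫ / ⟪aN, d⟫ with hq
      set a'' : Fin n → V m := fun i => a' i - q (a' i) • aN with ha''
      set b'' : V m := b - q b • aN with hb''
      have hprem : ∀ e : V m, (∀ i, ⟪a'' i, e⟫ ≤ 0) → ⟪b'', e⟫ ≤ 0 := by
        intro e he
        set e' : V m := e - (⟪aN, e⟫ / ⟪aN, d⟫) • d with he'
        have hall : ∀ i : Fin (n+1), ⟪a i, e'⟫ ≤ 0 := by
          intro i
          refine Fin.lastCases ?_ ?_ i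
          · rw [he']
            rw [inner_sub_right, real_inner_smul_right]
            rw [div_mul_cancel₀ _ hNd']
            simp [haN]
          · intro j
            have hje := he j
            rw [ha''] at hje
            simp only [inner_sub_left, real_inner_smul_left] at hje
            rw [he', inner_sub_right, real_inner_smul_right]
            have : ⟪a' j, e⟫ - ⟪aN, e⟫ / ⟪aN, d⟫ * ⟪a' j, d⟫
                = ⟪a' j, e⟫ - q (a' j) * ⟪aN, e⟫ := by
              rw [hq]; field_simp
            rw [this]
            exact hje
        have := h e' hall
        rw [he', inner_sub_right, real_inner_smul_right] at this
        rw [hb'', inner_sub_left, real_inner_smul_left]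
        have heq : ⟪b, e⟫ - q b * ⟪aN, e⟫ = ⟪b, e⟫ - ⟪aN, e⟫ / ⟪aN, d⟫ * ⟪b, d⟫ := by
          rw [hq]; field_simp
        rw [heq]
        exact this
      obtain ⟨μ, hμ, hbsum⟩ := IH a'' b'' hprem
      set c : ℝ := q b - ∑ i, μ i * q (a' i) with hcdef
      have hc0 : 0 ≤ c := by
        have h1 : 0 < q b := div_pos hbd hNd
        have h2 : ∑ i, μ i * q (a' i) ≤ 0 := by
          apply Finset.sum_nonpos
          intro i _
          exact mul_nonpos_of_nonneg_of_nonpos (hμ i) (div_nonpos_of_nonpos_of_nonneg (hd i) hNd.le)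
        rw [hcdef]; linarith
      refine ⟨Fin.snoc μ c, ?_, ?_⟩
      · intro i
        refine Fin.lastCases ?_ ?_ i
        · simpa using hc0
        · intro j; simpa using hμ j
      · rw [Fin.sum_univ_castSucc]
        simp only [Fin.snoc_castSucc, Fin.snoc_last]
        have hb2 : b = b'' + q b • aN := by rw [hb'']; abel
        rw [hb2, hbsum, hcdef, sub_smul, Finset.sum_smul]
        rw [ha'']
        simp only [smul_sub, smul_smul, Finset.sum_sub_distrib]
        abel

/-- If `d` is a strictly feasible direction at `u`, the VI gives `0 ≤ ⟪d, w⟫`. -/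
lemma strict_dir {m k : ℕ} (g : V m → V k)
    (hdiff : ∀ i, Differentiable ℝ (fun v => g v i))
    (u : V m) (hu : ∀ i, g u i ≤ 0) (w : V m)
    (hVI : ∀ u' : V m, (∀ i, g u' i ≤ 0) → 0 ≤ ⟪u' - u, w⟫)
    (d : V m) (hd : ∀ i, g u i = 0 → ⟪gradient (fun v => g v i) u, d⟫ < 0) :
    0 ≤ ⟪d, w⟫ := by
  have key : ∀ i, ∀ᶠ t : ℝ in nhdsWithin 0 (Set.Ioi 0), g (u + t • d) i ≤ 0 := by
    intro i
    rcases lt_or_eq_of_le (hu i) with hlt | heq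
    · -- inactive: continuity
      have hcont : ContinuousAt (fun t : ℝ => g (u + t • d) i) 0 := by
        apply Continuous.continuousAt
        exact (hdiff i).continuous.comp (continuous_const.add (continuous_id.smul continuous_const))
      have htend : Filter.Tendsto (fun t : ℝ => g (u + t • d) i) (nhds 0) (nhds (g u i)) := by
        have := hcont.tendsto
        simpa using this
      have := htend.eventually_lt_const hlt
      exact ((this.filter_mono nhdsWithin_le_nhds).mono (fun t ht => ht.le))
    · -- active: negative directional derivative
      set φ : ℝ → ℝ := fun t => g (u + t • d) i with hφ
      have hder : HasDerivAt φ ⟪gradient (fun v => g v i) u, d⟫ 0 :=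
        line_hasDerivAt (fun v => g v i) (hdiff i) u d
      have hneg : ⟪gradient (fun v => g v i) u, d⟫ < 0 := hd i heq
      have hslope : Filter.Tendsto (slope φ 0) (nhdsWithin 0 {(0:ℝ)}ᶜ)
          (nhds ⟪gradient (fun v => g v i) u, d⟫) := hasDerivAt_iff_tendsto_slope.mp hder
      have h1 : ∀ᶠ t in nhdsWithin (0:ℝ) {(0:ℝ)}ᶜ, slope φ 0 t < 0 :=
        hslope.eventually_lt_const hneg
      have h2 : ∀ᶠ t in nhdsWithin (0:ℝ) (Set.Ioi 0), slope φ 0 t < 0 :=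
        h1.filter_mono (nhdsWithin_mono 0 (fun t ht => ne_of_gt ht))
      have h3 : ∀ᶠ t in nhdsWithin (0:ℝ) (Set.Ioi 0), t ∈ Set.Ioi (0:ℝ) :=
        self_mem_nhdsWithin
      filter_upwards [h2, h3] with t hts htpos
      have hφ0 : φ 0 = 0 := by simpa [hφ] using heq
      rw [slope_def_field, hφ0, sub_zero, sub_zero] at hts
      have hlt : φ t < 0 := by
        rcases div_neg_iff.mp hts with ⟨h4, h5⟩ | ⟨h4, h5⟩
        · have := Set.mem_Ioi.mp htpos; linarith
        · exact h4
      exact hlt.le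
  have hall : ∀ᶠ t : ℝ in nhdsWithin 0 (Set.Ioi 0),
      (∀ i, g (u + t • d) i ≤ 0) ∧ t ∈ Set.Ioi (0:ℝ) :=
    (Filter.eventually_all.mpr key).and self_mem_nhdsWithin
  obtain ⟨t, hfeas, ht⟩ := hall.exists
  have hvi := hVI (u + t • d) hfeas
  rw [add_sub_cancel_left, real_inner_smul_left] at hvi
  by_contra hneg
  push_neg at hneg
  have := mul_neg_of_pos_of_neg ht hneg
  linarith

/-- For `K = {u : g(u) ≤ 0}` with convex differentiable components
of `g` and Slater's condition, `u ∈ K` solves the variational inequality with operator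
value `w` iff the KKT/complementarity system holds: there is `λ ≥ 0` with
`w + ∇g(u)λ = 0` and `0 ≤ λ ⊥ -g(u) ≥ 0`. -/
theorem vi_iff_kkt_complementarity (m k : ℕ) (g : V m → V k)
    (hconv : ∀ i, ConvexOn ℝ Set.univ (fun v => g v i))
    (hdiff : ∀ i, Differentiable ℝ (fun v => g v i))
    (hslater : ∃ u₀ : V m, ∀ i, g u₀ i < 0)
    (u : V m) (hu : ∀ i, g u i ≤ 0) (w : V m) :
    (∀ u' : V m, (∀ i, g u' i ≤ 0) → 0 ≤ ⟪u' - u, w⟫) ↔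
    ∃ lam : V k,
      w + ∑ i, lam i • gradient (fun v => g v i) u = 0 ∧
      (∀ i, 0 ≤ lam i) ∧ (∀ i, g u i ≤ 0) ∧ ⟪lam, g u⟫ = 0 := by
  constructor
  · -- forward: VI ⇒ KKT
    intro hVI
    obtain ⟨u₀, hu₀⟩ := hslater
    set a : Fin k → V m :=
      fun i => if g u i = 0 then gradient (fun v => g v i) u else 0 with ha
    have hprem : ∀ d : V m, (∀ i, ⟪a i, d⟫ ≤ 0) → ⟪-w, d⟫ ≤ 0 := by
      intro d hd
      have hd' : ∀ i, g u i = 0 → ⟪gradient (fun v => g v i) u, d⟫ ≤ 0 := by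
        intro i hi
        simpa [ha, hi] using hd i
      have hgoal : 0 ≤ ⟪d, w⟫ := by
        by_contra hneg
        push_neg at hneg
        set d₀ : V m := u₀ - u with hd₀def
        have hd₀ : ∀ i, g u i = 0 → ⟪gradient (fun v => g v i) u, d₀⟫ < 0 := by
          intro i hi
          have := grad_ineq (fun v => g v i) (hconv i) (hdiff i) u u₀
          have h2 := hu₀ i
          rw [hi] at this
          simpa [hd₀def] using lt_of_le_of_lt this (by linarith : g u₀ i - 0 < 0)
        set W : ℝ := ⟪d₀, w⟫ with hW
        rcases le_or_gt W 0 with hWle | hWpos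
        · -- ε = 1 works
          have hstrict : ∀ i, g u i = 0 →
              ⟪gradient (fun v => g v i) u, d + d₀⟫ < 0 := by
            intro i hi
            rw [inner_add_right]
            have := hd' i hi
            have := hd₀ i hi
            linarith
          have := strict_dir g hdiff u hu w hVI (d + d₀) hstrict
          rw [inner_add_left] at this
          linarith
        · -- ε = -⟪d,w⟫/(2W)
          set ε : ℝ := (-⟪d, w⟫) / (2 * W) with hε
          have hεpos : 0 < ε := div_pos (by linarith) (by linarith)
          have hstrict : ∀ i, g u i = 0 →
              ⟪gradient (fun v => g v i) u, d + ε • d₀⟫ < 0 := by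
            intro i hi
            rw [inner_add_right, real_inner_smul_right]
            have h1 := hd' i hi
            have h2 := hd₀ i hi
            nlinarith
          have hge := strict_dir g hdiff u hu w hVI (d + ε • d₀) hstrict
          rw [inner_add_left, real_inner_smul_left, ← hW] at hge
          have : ε * W = -⟪d, w⟫ / 2 := by
            rw [hε]; field_simp
          rw [this] at hge
          linarith
      rw [inner_neg_left, real_inner_comm]
      linarith
    obtain ⟨μ, hμ, hsum⟩ := farkas_fin k a (-w) hprem
    set lam : V k := WithLp.toLp 2 (fun i => if g u i = 0 then μ i else 0) with hlam
    refine ⟨lam, ?_, ?_, hu, ?_⟩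
    · have hsum2 : ∑ i, (if g u i = 0 then μ i else 0) • gradient (fun v => g v i) u
          = ∑ i, μ i • a i := by
        apply Finset.sum_congr rfl
        intro i _
        by_cases hi : g u i = 0 <;> simp [ha, hi]
      show w + ∑ i, (if g u i = 0 then μ i else 0) • gradient (fun v => g v i) u = 0
      rw [hsum2, ← hsum]
      abel
    · intro i
      by_cases hi : g u i = 0 <;> simp [hlam, hi, hμ i]
    · rw [PiLp.inner_apply]
      apply Finset.sum_eq_zero
      intro i _
      by_cases hi : g u i = 0 <;> simp [hlam, hi]
  · -- backward: KKT ⇒ VI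
    rintro ⟨lam, heq, hpos, -, hcomp⟩ u' hu'
    have hw : w = -∑ i, lam i • gradient (fun v => g v i) u :=
      eq_neg_of_add_eq_zero_left heq
    have hcomp' : ∑ i, lam i * g u i = 0 := by
      rw [PiLp.inner_apply] at hcomp
      simpa [mul_comm] using hcomp
    rw [hw, inner_neg_right, inner_sum]
    have hterm : ∀ i ∈ Finset.univ, ⟪u' - u, lam i • gradient (fun v => g v i) u⟫
        ≤ lam i * (g u' i - g u i) := by
      intro i _
      rw [real_inner_smul_right, real_inner_comm]
      exact mul_le_mul_of_nonneg_left (grad_ineq (fun v => g v i) (hconv i) (hdiff i) u u') (hpos i)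
    have hsle := Finset.sum_le_sum hterm
    have hfin : ∑ i, lam i * (g u' i - g u i) ≤ 0 := by
      have : ∑ i, lam i * (g u' i - g u i) = ∑ i, lam i * g u' i - ∑ i, lam i * g u i := by
        rw [← Finset.sum_sub_distrib]
        apply Finset.sum_congr rfl
        intro i _; ring
      rw [this, hcomp', sub_zero]
      apply Finset.sum_nonpos
      intro i _
      exact mul_nonpos_of_nonneg_of_nonpos (hpos i) (hu' i)
    linarith [le_trans hsle hfin]


end
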